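/- Let V be a finite-dimensional complex symplectic vector space and G ⊂ Sp(V) a finite subgroup. For any g, h ∈ G with V = V^g + V^h, one has rk(id_V − g·h) = rk(id_V − g) + rk(id_V − h). -/

import Mathlib

/-- Let `V` be a finite-dimensional complex symplectic vector space and
`G ⊂ Sp(V)` a finite subgroup.  For any `g, h ∈ G` with `V = V^g + V^h`, one has
`rk(id − g·h) = rk(id − g) + rk(id − h)`. -/
theorem rank_id_sub_mul_eq_add
    (V : Type*) [AddCommGroup V] [Module ℂ V] [FiniteDimensional ℂ V]
    (ω : LinearMap.BilinForm ℂ V) (hAlt : ω.IsAlt) (hNondeg : ω.Nondegenerate)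
    (G : Subgroup (V ≃ₗ[ℂ] V)) (hGfin : Finite G)
    (hGsymp : ∀ g ∈ G, ∀ u v : V, ω (g u) (g v) = ω u v)
    (g h : V ≃ₗ[ℂ] V) (hg : g ∈ G) (hh : h ∈ G)
    (hsum : LinearMap.ker ((1 : V →ₗ[ℂ] V) - g.toLinearMap) ⊔
        LinearMap.ker ((1 : V →ₗ[ℂ] V) - h.toLinearMap) = ⊤) :
    Module.finrank ℂ (LinearMap.range ((1 : V →ₗ[ℂ] V) - (g * h).toLinearMap)) =
      Module.finrank ℂ (LinearMap.range ((1 : V →ₗ[ℂ] V) - g.toLinearMap)) +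
        Module.finrank ℂ (LinearMap.range ((1 : V →ₗ[ℂ] V) - h.toLinearMap)) := by
  set Kg := LinearMap.ker ((1 : V →ₗ[ℂ] V) - g.toLinearMap) with hKg
  set Kh := LinearMap.ker ((1 : V →ₗ[ℂ] V) - h.toLinearMap) with hKh
  have hgs := hGsymp g hg
  have hhs := hGsymp h hh
  -- adjoint identity for symplectic automorphisms
  have adj : ∀ (k : V ≃ₗ[ℂ] V), (∀ u v : V, ω (k u) (k v) = ω u v) →
      ∀ u v : V, ω (u - k u) v = ω u (v - k.symm v) := by
    intro k hk u v
    have h1 : ω (k u) v = ω u (k.symm v) := by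
      conv_lhs => rw [← k.apply_symm_apply v]
      exact hk u (k.symm v)
    rw [map_sub, LinearMap.sub_apply, map_sub, h1]
  -- symplectic property of g.symm
  have hgs' : ∀ u v : V, ω (g.symm u) (g.symm v) = ω u v := by
    intro u v
    have := hgs (g.symm u) (g.symm v)
    simpa using this.symm
  -- fixed points of k and k⁻¹ agree
  have kerinv : ∀ (k : V ≃ₗ[ℂ] V) (v : V), k v = v → k.symm v = v := by
    intro k v hv
    conv_lhs => rw [← hv]
    exact k.symm_apply_apply v
  -- membership in the fixed subspaces
  have memKg : ∀ v : V, v ∈ Kg ↔ g v = v := by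
    intro v
    rw [hKg, LinearMap.mem_ker, LinearMap.sub_apply, Module.End.one_apply,
      LinearEquiv.coe_coe, sub_eq_zero, eq_comm]
  have memKh : ∀ v : V, v ∈ Kh ↔ h v = v := by
    intro v
    rw [hKh, LinearMap.mem_ker, LinearMap.sub_apply, Module.End.one_apply,
      LinearEquiv.coe_coe, sub_eq_zero, eq_comm]
  -- the crucial kernel identity
  have hker : LinearMap.ker ((1 : V →ₗ[ℂ] V) - (g * h).toLinearMap) = Kg ⊓ Kh := by
    apply le_antisymm
    · intro v hv
      have hv0 : (1 - (g * h).toLinearMap) v = 0 := LinearMap.mem_ker.1 hv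
      have hv' : g (h v) = v := by
        have hv1 : v - g (h v) = 0 := by
          simpa [LinearMap.sub_apply, LinearEquiv.coe_coe] using hv0
        exact (sub_eq_zero.mp hv1).symm
      have hinv : g.symm v = h v := by
        conv_lhs => rw [← hv']
        exact g.symm_apply_apply _
      -- show w := v - h v vanishes
      have hw : v - h v = 0 := by
        apply hNondeg.1
        intro u
        have hu : u ∈ Kg ⊔ Kh := by rw [hsum]; trivial
        obtain ⟨a, ha, b, hb, rfl⟩ := Submodule.mem_sup.1 hu
        have h1 : ω (v - h v) a = 0 := by
          rw [← hinv, adj g.symm hgs' v a]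
          have : a - g.symm.symm a = 0 := by
            rw [LinearEquiv.symm_symm, sub_eq_zero, (memKg a).1 ha]
          rw [this, map_zero]
        have h2 : ω (v - h v) b = 0 := by
          rw [adj h hhs v b]
          have : b - h.symm b = 0 := by
            rw [sub_eq_zero, (kerinv h b ((memKh b).1 hb))]
          rw [this, map_zero]
        rw [map_add, h1, h2, add_zero]
      have hhv : h v = v := (sub_eq_zero.mp hw).symm
      have hgv : g v = v := by
        calc g v = g (h v) := by rw [hhv]
        _ = v := hv'
      exact Submodule.mem_inf.2 ⟨(memKg v).2 hgv, (memKh v).2 hhv⟩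
    · intro v hv
      obtain ⟨hv1, hv2⟩ := Submodule.mem_inf.1 hv
      refine LinearMap.mem_ker.2 ?_
      simp [LinearMap.sub_apply, LinearEquiv.coe_coe, (memKh v).1 hv2,
        (memKg v).1 hv1, sub_eq_zero]
  -- rank–nullity and the dimension formula
  have r1 := LinearMap.finrank_range_add_finrank_ker ((1 : V →ₗ[ℂ] V) - g.toLinearMap)
  have r2 := LinearMap.finrank_range_add_finrank_ker ((1 : V →ₗ[ℂ] V) - h.toLinearMap)
  have r3 := LinearMap.finrank_range_add_finrank_ker ((1 : V →ₗ[ℂ] V) - (g * h).toLinearMap)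
  rw [hker] at r3
  have s := Submodule.finrank_sup_add_finrank_inf_eq Kg Kh
  rw [hsum, finrank_top] at s
  rw [← hKg] at r1
  rw [← hKh] at r2
  omega
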